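/- For a spherical triangle σ with side lengths a, b, c, determinant D = a·(b×c) > 0 (with vertices as unit vectors) and u = 1 + cos a + cos b + cos c, the area satisfies tan(|σ|/2) = D/u, where |σ| = A + B + C − π is the angular excess. -/

import Mathlib

open Matrix Real Set

set_option maxHeartbeats 2000000

private lemma proj_dot (x y z : Fin 3 → ℝ) (hx : x ⬝ᵥ x = 1) :
    (y - (y ⬝ᵥ x) • x) ⬝ᵥ (z - (z ⬝ᵥ x) • x) = y ⬝ᵥ z - (y ⬝ᵥ x) * (z ⬝ᵥ x) := by
  have h : (y - (y ⬝ᵥ x) • x) ⬝ᵥ (z - (z ⬝ᵥ x) • x) =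
      y ⬝ᵥ z - (y ⬝ᵥ x) * (z ⬝ᵥ x) - (y ⬝ᵥ x) * (z ⬝ᵥ x) + (y ⬝ᵥ x) * (z ⬝ᵥ x) * (x ⬝ᵥ x) := by
    simp [dotProduct, Fin.sum_univ_three]; ring
  rw [h, hx]; ring

private lemma proj_norm (x y : Fin 3 → ℝ) (hx : x ⬝ᵥ x = 1) :
    (y - (y ⬝ᵥ x) • x) ⬝ᵥ (y - (y ⬝ᵥ x) • x) = y ⬝ᵥ y - (y ⬝ᵥ x) ^ 2 := by
  rw [proj_dot x y y hx]; ring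

private lemma gram (a b c : Fin 3 → ℝ) (ha : a ⬝ᵥ a = 1) (hb : b ⬝ᵥ b = 1)
    (hc : c ⬝ᵥ c = 1) :
    (a ⬝ᵥ (b ⨯₃ c)) ^ 2 =
      1 - (b ⬝ᵥ c) ^ 2 - (a ⬝ᵥ c) ^ 2 - (a ⬝ᵥ b) ^ 2 +
        2 * ((b ⬝ᵥ c) * (a ⬝ᵥ c) * (a ⬝ᵥ b)) := by
  have h : (a ⬝ᵥ (b ⨯₃ c)) ^ 2 =
      (a ⬝ᵥ a) * ((b ⬝ᵥ b) * (c ⬝ᵥ c)) + 2 * ((b ⬝ᵥ c) * (a ⬝ᵥ c) * (a ⬝ᵥ b))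
        - (a ⬝ᵥ a) * (b ⬝ᵥ c) ^ 2 - (b ⬝ᵥ b) * (a ⬝ᵥ c) ^ 2 - (c ⬝ᵥ c) * (a ⬝ᵥ b) ^ 2 := by
    simp [cross_apply, dotProduct, Fin.sum_univ_three]; ring
  rw [h, ha, hb, hc]; ring

private lemma scalar_main (p q r D u A B C : ℝ)
    (hp2 : p ^ 2 < 1) (hq2 : q ^ 2 < 1) (hr2 : r ^ 2 < 1)
    (hDpos : 0 < D)
    (hGram : D ^ 2 = 1 - p ^ 2 - q ^ 2 - r ^ 2 + 2 * (p * q * r))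
    (hu : u = 1 + p + q + r)
    (hA0 : 0 ≤ A) (hA1 : A ≤ π) (hB0 : 0 ≤ B) (hB1 : B ≤ π) (hC0 : 0 ≤ C) (hC1 : C ≤ π)
    (hcosA : Real.cos A = (p - q * r) / (Real.sqrt (1 - r ^ 2) * Real.sqrt (1 - q ^ 2)))
    (hcosB : Real.cos B = (q - p * r) / (Real.sqrt (1 - p ^ 2) * Real.sqrt (1 - r ^ 2)))
    (hcosC : Real.cos C = (r - p * q) / (Real.sqrt (1 - q ^ 2) * Real.sqrt (1 - p ^ 2))) :
    Real.tan ((A + B + C - π) / 2) = D / u := by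
  set sa := Real.sqrt (1 - p ^ 2) with hsa
  set sb := Real.sqrt (1 - q ^ 2) with hsb
  set sc := Real.sqrt (1 - r ^ 2) with hsc
  have hsa2 : sa ^ 2 = 1 - p ^ 2 := Real.sq_sqrt (by nlinarith)
  have hsb2 : sb ^ 2 = 1 - q ^ 2 := Real.sq_sqrt (by nlinarith)
  have hsc2 : sc ^ 2 = 1 - r ^ 2 := Real.sq_sqrt (by nlinarith)
  have hsa0 : 0 < sa := Real.sqrt_pos.2 (by nlinarith)
  have hsb0 : 0 < sb := Real.sqrt_pos.2 (by nlinarith)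
  have hsc0 : 0 < sc := Real.sqrt_pos.2 (by nlinarith)
  have hpm : -1 < p := by nlinarith
  have hqm : -1 < q := by nlinarith
  have hrm : -1 < r := by nlinarith
  have hPipos : (0:ℝ) < (1 - p ^ 2) * (1 - q ^ 2) * (1 - r ^ 2) :=
    mul_pos (mul_pos (by linarith) (by linarith)) (by linarith)
  have hRpos : (0:ℝ) < (1 + p) * (1 + q) * (1 + r) :=
    mul_pos (mul_pos (by linarith) (by linarith)) (by linarith)
  -- sines of the angles
  have hsinA : Real.sin A = D / (sc * sb) := by
    have h1 : Real.sin A = Real.sqrt (1 - Real.cos A ^ 2) :=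
      Real.sin_eq_sqrt_one_sub_cos_sq hA0 hA1
    have h2 : 1 - Real.cos A ^ 2 = (D / (sc * sb)) ^ 2 := by
      rw [hcosA]
      field_simp
      linear_combination sb ^ 2 * hsc2 + (1 - r ^ 2) * hsb2 - hGram
    rw [h2, Real.sqrt_sq (by positivity)] at h1
    exact h1
  have hsinB : Real.sin B = D / (sa * sc) := by
    have h1 : Real.sin B = Real.sqrt (1 - Real.cos B ^ 2) :=
      Real.sin_eq_sqrt_one_sub_cos_sq hB0 hB1
    have h2 : 1 - Real.cos B ^ 2 = (D / (sa * sc)) ^ 2 := by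
      rw [hcosB]
      field_simp
      linear_combination sc ^ 2 * hsa2 + (1 - p ^ 2) * hsc2 - hGram
    rw [h2, Real.sqrt_sq (by positivity)] at h1
    exact h1
  have hsinC : Real.sin C = D / (sb * sa) := by
    have h1 : Real.sin C = Real.sqrt (1 - Real.cos C ^ 2) :=
      Real.sin_eq_sqrt_one_sub_cos_sq hC0 hC1
    have h2 : 1 - Real.cos C ^ 2 = (D / (sb * sa)) ^ 2 := by
      rw [hcosC]
      field_simp
      linear_combination sa ^ 2 * hsb2 + (1 - q ^ 2) * hsa2 - hGram
    rw [h2, Real.sqrt_sq (by positivity)] at h1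
    exact h1
  -- sine and cosine of the angle sum
  have h1' : Real.sin (A + B + C) * (sa * sb * sc) ^ 2 =
      D * ((q - p * r) * (r - p * q) + (p - q * r) * (r - p * q) +
        (p - q * r) * (q - p * r)) - D ^ 3 := by
    rw [Real.sin_add, Real.sin_add, Real.cos_add, hcosA, hcosB, hcosC, hsinA, hsinB, hsinC]
    field_simp
    ring
  have h2' : Real.cos (A + B + C) * (sa * sb * sc) ^ 2 =
      (p - q * r) * (q - p * r) * (r - p * q) -
        D ^ 2 * ((p - q * r) + (q - p * r) + (r - p * q)) := by
    rw [Real.cos_add, Real.cos_add, Real.sin_add, hcosA, hcosB, hcosC, hsinA, hsinB, hsinC]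
    field_simp
    ring
  have hPi : (sa * sb * sc) ^ 2 = (1 - p ^ 2) * (1 - q ^ 2) * (1 - r ^ 2) := by
    rw [mul_pow, mul_pow, hsa2, hsb2, hsc2]
  rw [hPi] at h1' h2'
  set t : ℝ := (A + B + C - π) / 2 with htdef
  have hE : A + B + C - π = 2 * t := by rw [htdef]; ring
  have hst : 2 * Real.sin t * Real.cos t = - Real.sin (A + B + C) := by
    have h := Real.sin_two_mul t
    rw [← hE] at h
    rw [← h, Real.sin_sub, Real.sin_pi, Real.cos_pi]; ring
  have hct : 2 * Real.cos t ^ 2 = 1 - Real.cos (A + B + C) := by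
    have h := Real.cos_two_mul t
    rw [← hE, Real.cos_sub, Real.sin_pi, Real.cos_pi] at h
    linarith
  have F1 : (2 * Real.sin t * Real.cos t * ((1 + p) * (1 + q) * (1 + r))) *
      ((1 - p ^ 2) * (1 - q ^ 2) * (1 - r ^ 2)) =
      (u * D) * ((1 - p ^ 2) * (1 - q ^ 2) * (1 - r ^ 2)) := by
    rw [hst]
    linear_combination (-((1 + p) * (1 + q) * (1 + r))) * h1' +
      D * ((1 + p) * (1 + q) * (1 + r)) * hGram +
      (-(D * ((1 - p ^ 2) * (1 - q ^ 2) * (1 - r ^ 2)))) * hu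
  have F2 : (2 * Real.cos t ^ 2 * ((1 + p) * (1 + q) * (1 + r))) *
      ((1 - p ^ 2) * (1 - q ^ 2) * (1 - r ^ 2)) =
      (u ^ 2) * ((1 - p ^ 2) * (1 - q ^ 2) * (1 - r ^ 2)) := by
    rw [hct]
    linear_combination (-((1 + p) * (1 + q) * (1 + r))) * h2' +
      ((1 + p) * (1 + q) * (1 + r)) * ((p - q * r) + (q - p * r) + (r - p * q)) * hGram +
      (-((u + 1 + p + q + r) * ((1 - p ^ 2) * (1 - q ^ 2) * (1 - r ^ 2)))) * hu
  have F1' : 2 * Real.sin t * Real.cos t * ((1 + p) * (1 + q) * (1 + r)) = u * D :=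
    mul_right_cancel₀ hPipos.ne' F1
  have F2' : 2 * Real.cos t ^ 2 * ((1 + p) * (1 + q) * (1 + r)) = u ^ 2 :=
    mul_right_cancel₀ hPipos.ne' F2
  have key : Real.cos t * (u * Real.sin t - D * Real.cos t) = 0 := by
    have h : (Real.cos t * (u * Real.sin t - D * Real.cos t)) *
        (2 * ((1 + p) * (1 + q) * (1 + r))) = 0 := by
      linear_combination u * F1' - D * F2'
    have h2 : (2 * ((1 + p) * (1 + q) * (1 + r))) ≠ 0 := by positivity
    exact (mul_eq_zero.1 h).resolve_right h2
  rcases mul_eq_zero.1 key with hco | hlin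
  · have hu0 : u = 0 := by
      have : u ^ 2 = 0 := by rw [← F2', hco]; ring
      exact pow_eq_zero_iff (by norm_num) |>.1 this
    rw [Real.tan_eq_sin_div_cos, hco, div_zero, hu0, div_zero]
  · by_cases hco : Real.cos t = 0
    · have hu0 : u = 0 := by
        have : u ^ 2 = 0 := by rw [← F2', hco]; ring
        exact pow_eq_zero_iff (by norm_num) |>.1 this
      rw [Real.tan_eq_sin_div_cos, hco, div_zero, hu0, div_zero]
    · have hu0 : u ≠ 0 := by
        intro h0
        rw [h0] at hlin
        have : D * Real.cos t = 0 := by linarith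
        rcases mul_eq_zero.1 this with h | h
        · exact absurd h hDpos.ne'
        · exact hco h
      rw [Real.tan_eq_sin_div_cos]
      rw [div_eq_div_iff hco hu0]
      linarith

theorem spherical_area_tan_half
    (a b c : Fin 3 → ℝ)
    (ha : a ⬝ᵥ a = 1) (hb : b ⬝ᵥ b = 1) (hc : c ⬝ᵥ c = 1)
    (D : ℝ) (hD : D = a ⬝ᵥ (b ⨯₃ c)) (hDpos : 0 < D)
    (a' b' c' A B C u : ℝ)
    (ha' : a' ∈ Icc (0:ℝ) π) (hb' : b' ∈ Icc (0:ℝ) π) (hc' : c' ∈ Icc (0:ℝ) π)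
    (hcosa' : Real.cos a' = b ⬝ᵥ c)
    (hcosb' : Real.cos b' = a ⬝ᵥ c)
    (hcosc' : Real.cos c' = a ⬝ᵥ b)
    (hu : u = 1 + Real.cos a' + Real.cos b' + Real.cos c')
    (hA : A ∈ Icc (0:ℝ) π) (hB : B ∈ Icc (0:ℝ) π) (hC : C ∈ Icc (0:ℝ) π)
    (hcosA : Real.cos A =
      ((b - (b ⬝ᵥ a) • a) ⬝ᵥ (c - (c ⬝ᵥ a) • a)) /
        (Real.sqrt ((b - (b ⬝ᵥ a) • a) ⬝ᵥ (b - (b ⬝ᵥ a) • a)) *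
          Real.sqrt ((c - (c ⬝ᵥ a) • a) ⬝ᵥ (c - (c ⬝ᵥ a) • a))))
    (hcosB : Real.cos B =
      ((c - (c ⬝ᵥ b) • b) ⬝ᵥ (a - (a ⬝ᵥ b) • b)) /
        (Real.sqrt ((c - (c ⬝ᵥ b) • b) ⬝ᵥ (c - (c ⬝ᵥ b) • b)) *
          Real.sqrt ((a - (a ⬝ᵥ b) • b) ⬝ᵥ (a - (a ⬝ᵥ b) • b))))
    (hcosC : Real.cos C =
      ((a - (a ⬝ᵥ c) • c) ⬝ᵥ (b - (b ⬝ᵥ c) • c)) /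
        (Real.sqrt ((a - (a ⬝ᵥ c) • c) ⬝ᵥ (a - (a ⬝ᵥ c) • c)) *
          Real.sqrt ((b - (b ⬝ᵥ c) • c) ⬝ᵥ (b - (b ⬝ᵥ c) • c)))) :
    Real.tan ((A + B + C - π) / 2) = D / u := by
  set p := Real.cos a' with hp
  set q := Real.cos b' with hq
  set r := Real.cos c' with hr
  -- rewrite the angle cosines in scalar form
  rw [proj_dot a b c ha, proj_norm a b ha, proj_norm a c ha, hb, hc,
    dotProduct_comm b a, dotProduct_comm c a, ← hcosa', ← hcosb', ← hcosc'] at hcosA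
  rw [proj_dot b c a hb, proj_norm b c hb, proj_norm b a hb, hc, ha,
    dotProduct_comm c b, dotProduct_comm c a, ← hcosa', ← hcosb', ← hcosc'] at hcosB
  rw [proj_dot c a b hc, proj_norm c a hc, proj_norm c b hc, ha, hb,
    ← hcosa', ← hcosb', ← hcosc'] at hcosC
  -- Gram identity
  have hGram : D ^ 2 = 1 - p ^ 2 - q ^ 2 - r ^ 2 + 2 * (p * q * r) := by
    have h := gram a b c ha hb hc
    rw [← hcosa', ← hcosb', ← hcosc'] at h
    rw [hD]; exact h
  have hG : (0:ℝ) < 1 - p ^ 2 - q ^ 2 - r ^ 2 + 2 * (p * q * r) := by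
    rw [← hGram]; positivity
  have hp1 : p ≤ 1 := hp ▸ Real.cos_le_one a'
  have hq1 : q ≤ 1 := hq ▸ Real.cos_le_one b'
  have hr1 : r ≤ 1 := hr ▸ Real.cos_le_one c'
  have hp1' : -1 ≤ p := hp ▸ Real.neg_one_le_cos a'
  have hq1' : -1 ≤ q := hq ▸ Real.neg_one_le_cos b'
  have hr1' : -1 ≤ r := hr ▸ Real.neg_one_le_cos c'
  have h1p0 : (0:ℝ) ≤ 1 - p ^ 2 := by nlinarith
  have h1q0 : (0:ℝ) ≤ 1 - q ^ 2 := by nlinarith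
  have h1r0 : (0:ℝ) ≤ 1 - r ^ 2 := by nlinarith
  have hp2 : p ^ 2 < 1 := by nlinarith [sq_nonneg (r - p * q), h1q0]
  have hq2 : q ^ 2 < 1 := by nlinarith [sq_nonneg (r - p * q), h1p0]
  have hr2 : r ^ 2 < 1 := by nlinarith [sq_nonneg (q - p * r), h1p0]
  have hcosA' : Real.cos A = (p - q * r) / (Real.sqrt (1 - r ^ 2) * Real.sqrt (1 - q ^ 2)) := by
    rw [hcosA]; ring_nf
  have hcosB' : Real.cos B = (q - p * r) / (Real.sqrt (1 - p ^ 2) * Real.sqrt (1 - r ^ 2)) := by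
    rw [hcosB]
  have hcosC' : Real.cos C = (r - p * q) / (Real.sqrt (1 - q ^ 2) * Real.sqrt (1 - p ^ 2)) := by
    rw [hcosC]; ring_nf
  exact scalar_main p q r D u A B C hp2 hq2 hr2 hDpos hGram hu
    hA.1 hA.2 hB.1 hB.2 hC.1 hC.2 hcosA' hcosB' hcosC'
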